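/- Let h = 2^10. Suppose the shortest s–v path in the weighted disk graph G contains an irregular edge uv (i.e., max(r_u, r_v) ≥ h·min(r_u, r_v)), where u ≠ s is the predecessor of v in the shortest path tree T, and v is not a leaf of T. Then |uv| ≥ (1 − 1/h)·max(r_u, r_v). -/

import Mathlib

noncomputable section

/-- Points of the plane. -/
abbrev Pt := EuclideanSpace ℝ (Fin 2)

/-- Membership in the closed axis-parallel square of Euclidean diameter `d`
(side `d/√2`) centered at `p`. -/
def inSq (p : Pt) (d : ℝ) (x : Pt) : Prop :=
  ∀ i, |x i - p i| ≤ d / (2 * Real.sqrt 2)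

/-- Adjacency in the weighted disk graph: distinct points whose disks intersect. -/
def Adj (r : Pt → ℝ) (x y : Pt) : Prop := x ≠ y ∧ dist x y ≤ r x + r y

/-- A (simple) path from `s` to `v` in the weighted disk graph on `P`. -/
def IsPath (P : Set Pt) (r : Pt → ℝ) (s v : Pt) (L : List Pt) : Prop :=
  L.head? = some s ∧ L.getLast? = some v ∧ (∀ x ∈ L, x ∈ P) ∧ L.Nodup ∧ L.Chain' (Adj r)

/-- The length of a path: the sum of the Euclidean lengths of its edges. -/
def pathLen : List Pt → ℝ
  | [] => 0
  | [_] => 0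
  | a :: b :: L => dist a b + pathLen (b :: L)

/-- Shortest-path distance from `s` to `v` in the weighted disk graph on `P`. -/
def spDist (P : Set Pt) (r : Pt → ℝ) (s v : Pt) : ℝ :=
  sInf (pathLen '' {L | IsPath P r s v L})

lemma pathLen_nonneg : ∀ L : List Pt, 0 ≤ pathLen L
  | [] => le_of_eq rfl
  | [_] => le_of_eq rfl
  | _ :: b :: L => add_nonneg dist_nonneg (pathLen_nonneg (b :: L))

lemma pathLen_concat : ∀ (L : List Pt) (a y : Pt), L.getLast? = some a →
    pathLen (L ++ [y]) = pathLen L + dist a y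
  | [], a, y, h => by simp at h
  | [b], a, y, h => by
      obtain rfl : b = a := by simpa using h
      show dist b y + pathLen [y] = pathLen [b] + dist b y
      show dist b y + 0 = 0 + dist b y
      ring
  | b :: c :: L, a, y, h => by
      have h' : (c :: L).getLast? = some a := by
        rwa [List.getLast?_cons_cons] at h
      have ih := pathLen_concat (c :: L) a y h'
      show dist b c + pathLen ((c :: L) ++ [y]) = (dist b c + pathLen (c :: L)) + dist a y
      rw [ih]; ring

lemma pathLen_prefix : ∀ (M N : List Pt), pathLen M ≤ pathLen (M ++ N)
  | [], N => pathLen_nonneg N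
  | [a], N => by
      have : pathLen [a] = 0 := rfl
      rw [this]; exact pathLen_nonneg _
  | a :: b :: M, N => by
      have ih := pathLen_prefix (b :: M) N
      show dist a b + pathLen (b :: M) ≤ dist a b + pathLen ((b :: M) ++ N)
      linarith

lemma spDist_le {P : Set Pt} {r : Pt → ℝ} {s x : Pt} {L : List Pt}
    (hL : IsPath P r s x L) : spDist P r s x ≤ pathLen L := by
  apply csInf_le
  · exact ⟨0, by rintro y ⟨M, _, rfl⟩; exact pathLen_nonneg M⟩
  · exact ⟨L, hL, rfl⟩

lemma isPath_concat {P : Set Pt} {r : Pt → ℝ} {s a y : Pt} {L : List Pt}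
    (hL : IsPath P r s a L) (hy : y ∈ P) (hadj : Adj r a y) (hyL : y ∉ L) :
    IsPath P r s y (L ++ [y]) := by
  obtain ⟨h1, h2, h3, h4, h5⟩ := hL
  refine ⟨?_, ?_, ?_, ?_, ?_⟩
  · rw [List.head?_append, h1]; rfl
  · exact List.getLast?_concat (l := L)
  · intro z hz
    rcases List.mem_append.mp hz with hz | hz
    · exact h3 z hz
    · simp at hz; subst hz; exact hy
  · rw [List.nodup_append']
    exact ⟨h4, List.nodup_singleton y, by
      intro z hz hz'; simp at hz'; subst hz'; exact hyL hz⟩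
  · show List.IsChain (Adj r) (L ++ [y]); rw [List.isChain_append]
    refine ⟨h5, List.isChain_singleton y, ?_⟩
    intro x hx y' hy'
    rw [h2] at hx; simp at hx hy'; subst hx; subst hy'; exact hadj

/-- If `x` occurs on a path `L` from `s` to `a`, then `spDist s x ≤ pathLen L`. -/
lemma spDist_le_of_mem {P : Set Pt} {r : Pt → ℝ} {s a x : Pt} {L : List Pt}
    (hL : IsPath P r s a L) (hx : x ∈ L) : spDist P r s x ≤ pathLen L := by
  obtain ⟨L₁, L₂, rfl⟩ := List.append_of_mem hx
  obtain ⟨h1, h2, h3, h4, h5⟩ := hL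
  have hpre : (L₁ ++ [x]) <+: (L₁ ++ x :: L₂) := ⟨L₂, by simp⟩
  have hpath : IsPath P r s x (L₁ ++ [x]) := by
    refine ⟨?_, List.getLast?_concat (l := L₁), ?_, ?_, h5.prefix hpre⟩
    · rw [List.head?_append] at h1 ⊢; simpa using h1
    · intro z hz; exact h3 z (hpre.subset hz)
    · exact h4.sublist hpre.sublist
  calc spDist P r s x ≤ pathLen (L₁ ++ [x]) := spDist_le hpath
    _ ≤ pathLen ((L₁ ++ [x]) ++ L₂) := pathLen_prefix _ _
    _ = pathLen (L₁ ++ x :: L₂) := by rw [List.append_assoc]; rfl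

/-- Core contradiction: `a—b—c` consecutive shortest-path predecessors with a
shortcut edge `a—c` contradicts uniqueness of shortest paths. -/
lemma core_contra (P : Set Pt) (r : Pt → ℝ) (s : Pt)
    (huniq : ∀ v ∈ P, ∃! L, IsPath P r s v L ∧ pathLen L = spDist P r s v)
    {a b c : Pt} (ha : a ∈ P) (hb : b ∈ P) (hc : c ∈ P)
    (hab : Adj r a b) (hbc : Adj r b c) (hac : Adj r a c)
    (eb : spDist P r s b = spDist P r s a + dist a b)
    (ec : spDist P r s c = spDist P r s b + dist b c) : False := by
  obtain ⟨L, ⟨hLpath, hLlen⟩, -⟩ := huniq a ha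
  have dab : 0 < dist a b := dist_pos.mpr hab.1
  have dbc : 0 < dist b c := dist_pos.mpr hbc.1
  have hbL : b ∉ L := by
    intro hmem
    have := spDist_le_of_mem hLpath hmem
    rw [hLlen] at this; linarith
  have hcL : c ∉ L := by
    intro hmem
    have := spDist_le_of_mem hLpath hmem
    rw [hLlen] at this; linarith
  have hlast : L.getLast? = some a := hLpath.2.1
  -- Path 1 : L ++ [c]
  have hP1 : IsPath P r s c (L ++ [c]) := isPath_concat hLpath hc hac hcL
  have hP1len : pathLen (L ++ [c]) = spDist P r s a + dist a c := by
    rw [pathLen_concat L a c hlast, hLlen]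
  have hP1short : pathLen (L ++ [c]) = spDist P r s c := by
    have h1 : spDist P r s c ≤ pathLen (L ++ [c]) := spDist_le hP1
    have h2 : pathLen (L ++ [c]) ≤ spDist P r s c := by
      rw [hP1len, ec, eb]
      have := dist_triangle a b c
      linarith
    linarith
  -- Path 2 : L ++ [b] ++ [c]
  have hP2' : IsPath P r s b (L ++ [b]) := isPath_concat hLpath hb hab hbL
  have hP2'len : pathLen (L ++ [b]) = spDist P r s b := by
    rw [pathLen_concat L a b hlast, hLlen, eb]
  have hcLb : c ∉ L ++ [b] := by
    intro hmem
    rcases List.mem_append.mp hmem with h | h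
    · exact hcL h
    · simp at h; exact hbc.1 h.symm
  have hP2 : IsPath P r s c ((L ++ [b]) ++ [c]) := isPath_concat hP2' hc hbc hcLb
  have hP2short : pathLen ((L ++ [b]) ++ [c]) = spDist P r s c := by
    rw [pathLen_concat (L ++ [b]) b c (List.getLast?_concat (l := L)), hP2'len, ec]
  obtain ⟨Lc, -, hcu⟩ := huniq c hc
  have e1 := hcu (L ++ [c]) ⟨hP1, hP1short⟩
  have e2 := hcu ((L ++ [b]) ++ [c]) ⟨hP2, hP2short⟩
  have : (L ++ [c]).length = ((L ++ [b]) ++ [c]).length := by rw [e1, e2]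
  simp at this

/-- Let `h = 2^10 = 1024`. Assume every vertex of `P` is connected to
`s` and shortest paths from `s` are unique, and let `prv` be the predecessor function of
the resulting shortest path tree `T` rooted at `s`. Suppose the shortest `s`–`v` path
contains an irregular edge `uv` where `u = prv v ≠ s`
(irregular: `h·min(r u, r v) ≤ max(r u, r v)`), and `v` is not a leaf of `T`. Then
`|uv| ≥ (1 − 1/h)·max(r u, r v)`. -/
theorem irregular_predecessor_edge_long_arbitrary
    (P : Set Pt) (r : Pt → ℝ) (hr : ∀ p ∈ P, 1 ≤ r p)
    (s : Pt) (hs : s ∈ P)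
    (hconn : ∀ v ∈ P, ∃ L, IsPath P r s v L)
    (huniq : ∀ v ∈ P, ∃! L, IsPath P r s v L ∧ pathLen L = spDist P r s v)
    (prv : Pt → Pt)
    (hprv : ∀ v ∈ P, v ≠ s → prv v ∈ P ∧ Adj r (prv v) v ∧
      spDist P r s v = spDist P r s (prv v) + dist (prv v) v)
    (v : Pt) (hv : v ∈ P) (hvs : v ≠ s) (hus : prv v ≠ s)
    (hirr : 1024 * min (r (prv v)) (r v) ≤ max (r (prv v)) (r v))
    (hleaf : ∃ x ∈ P, x ≠ s ∧ prv x = v) :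
    (1 - 1 / 1024) * max (r (prv v)) (r v) ≤ dist (prv v) v := by
  by_contra hcon
  push_neg at hcon
  obtain ⟨hu, huv, eqv⟩ := hprv v hv hvs
  set u := prv v with hudef
  have duv : 0 < dist u v := dist_pos.mpr huv.1
  rcases le_total (r v) (r u) with hle | hle
  · -- r u is the max
    rw [max_eq_left hle] at hirr hcon
    rw [min_eq_right hle] at hirr
    obtain ⟨x, hx, hxs, hxv⟩ := hleaf
    obtain ⟨-, hvx, eqx⟩ := hprv x hx hxs
    rw [hxv] at hvx eqx
    have dvx : 0 < dist v x := dist_pos.mpr hvx.1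
    have hux : u ≠ x := by
      rintro rfl
      rw [eqv] at eqx
      linarith
    have hadjux : Adj r u x := by
      refine ⟨hux, ?_⟩
      have ht := dist_triangle u v x
      have := hvx.2
      linarith
    exact core_contra P r s huniq hu hv hx huv hvx hadjux eqv eqx
  · -- r v is the max
    rw [max_eq_right hle] at hirr hcon
    rw [min_eq_left hle] at hirr
    obtain ⟨hw, hwu, equ⟩ := hprv u hu hus
    have dwu : 0 < dist (prv u) u := dist_pos.mpr hwu.1
    have hwv : prv u ≠ v := by
      intro hwveq
      rw [hwveq, eqv, dist_comm v u] at equ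
      linarith
    have hadjwv : Adj r (prv u) v := by
      refine ⟨hwv, ?_⟩
      have ht := dist_triangle (prv u) u v
      have := hwu.2
      linarith
    exact core_contra P r s huniq hw hu hv hwu huv hadjwv equ eqv
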